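/- Let (X,d,μ) be a space of homogeneous type, let p(·), q(·) ∈ 𝒫₁(X) satisfy 1/p(x) − 1/q(x) ≡ η for a constant η ∈ [0,1), and let ω be a weight on X. Then there is a constant C depending only on p(·), q(·) and η such that [ω]_{A_{q(·)}} ≤ C·[ω]_{A_{p(·),q(·)}}, where [ω]_{A_{q(·)}} := sup over balls B ⊆ X of μ(B)^{−1} ‖ω χ_B‖_{q(·)} ‖ω^{−1} χ_B‖_{q′(·)}. -/

import Mathlib

open MeasureTheory ENNReal Set Filter Topology

noncomputable section

variable {X : Type*}

/-- `d` is a quasi-metric on `X` with quasi-triangle constant `A0`. -/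
def IsQuasiMetric (d : X → X → ℝ) (A0 : ℝ) : Prop :=
  1 ≤ A0 ∧ (∀ x y, 0 ≤ d x y) ∧ (∀ x y, d x y = 0 ↔ x = y) ∧
    (∀ x y, d x y = d y x) ∧ ∀ x y z, d x y ≤ A0 * (d x z + d z y)

/-- The quasi-metric ball `B(c,r)`. -/
def qball (d : X → X → ℝ) (c : X) (r : ℝ) : Set X := {y | d c y < r}

/-- The measure `μ` is doubling (with constant `Cμ`) on quasi-metric balls:
`0 < μ(B(x,2r)) ≤ Cμ·μ(B(x,r)) < ∞`. -/
def IsDoubling [MeasurableSpace X] (d : X → X → ℝ) (μ : Measure X) (Cμ : ℝ≥0∞) : Prop :=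
  1 ≤ Cμ ∧ ∀ (x : X) (r : ℝ), 0 < r →
    0 < μ (qball d x (2 * r)) ∧ μ (qball d x (2 * r)) ≤ Cμ * μ (qball d x r) ∧
      Cμ * μ (qball d x r) < ∞

/-- The Luxemburg norm `‖f‖_{p(·)}` for a variable (possibly infinite) exponent `p`. -/
def luxNorm [MeasurableSpace X] (μ : Measure X) (p : X → ℝ≥0∞) (f : X → ℝ≥0∞) : ℝ≥0∞ :=
  sInf {lam : ℝ≥0∞ | 0 < lam ∧
    (∫⁻ x in {x | p x ≠ ∞}, (f x / lam) ^ (p x).toReal ∂μ) +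
      essSup (fun x => f x / lam) (μ.restrict {x | p x = ∞}) ≤ 1}

/-- The class `𝒫₁(X)`: exponents with values in `[1,∞)` and `p₊ < ∞`. -/
def MemP1 [MeasurableSpace X] (μ : Measure X) (p : X → ℝ≥0∞) : Prop :=
  Measurable p ∧ (∀ x, 1 ≤ p x) ∧ (∀ x, p x ≠ ∞) ∧ essSup p μ < ∞

/-- The class `𝒫(X)`: additionally `1 < p₋`. -/
def MemP [MeasurableSpace X] (μ : Measure X) (p : X → ℝ≥0∞) : Prop :=
  MemP1 μ p ∧ 1 < essInf p μ

/-- Local log-Hölder continuity `LH₀`. -/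
def MemLH0 (d : X → X → ℝ) (p : X → ℝ≥0∞) : Prop :=
  ∃ C0 : ℝ, 0 ≤ C0 ∧ ∀ x y, d x y < 1 / 2 →
    |(p x).toReal - (p y).toReal| ≤ C0 / Real.log (Real.exp 1 + 1 / d x y)

/-- Log-Hölder decay at infinity `LH_∞` with base point `x0` and limit value `pinf`. -/
def MemLHinf (d : X → X → ℝ) (x0 : X) (pinf : ℝ) (p : X → ℝ≥0∞) : Prop :=
  ∃ Cinf : ℝ, 0 ≤ Cinf ∧ ∀ x, |(p x).toReal - pinf| ≤ Cinf / Real.log (Real.exp 1 + d x x0)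

/-- Global log-Hölder continuity `LH = LH₀ ∩ LH_∞`. -/
def MemLH (d : X → X → ℝ) (p : X → ℝ≥0∞) : Prop :=
  MemLH0 d p ∧ ∃ x0 pinf, MemLHinf d x0 pinf p

/-- `w` is a weight: measurable, positive and finite a.e., and locally integrable. -/
def IsWeight [MeasurableSpace X] (d : X → X → ℝ) (μ : Measure X) (w : X → ℝ≥0∞) : Prop :=
  Measurable w ∧ (∀ᵐ x ∂μ, 0 < w x ∧ w x < ∞) ∧
    ∀ (c : X) (r : ℝ), 0 < r → ∫⁻ x in qball d c r, w x ∂μ < ∞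

/-- The pointwise conjugate exponent `p′(·)`, `1/p(x) + 1/p′(x) = 1`. -/
def conjExp (p : X → ℝ≥0∞) : X → ℝ≥0∞ := fun x => if p x = ∞ then 1 else p x / (p x - 1)

/-- The `A_{p(·),q(·)}` characteristic constant
`sup_B μ(B)^{η−1} ‖w χ_B‖_{q(·)} ‖w⁻¹ χ_B‖_{p′(·)}`. -/
def ApqConst [MeasurableSpace X] (d : X → X → ℝ) (μ : Measure X) (η : ℝ)
    (p q : X → ℝ≥0∞) (w : X → ℝ≥0∞) : ℝ≥0∞ :=
  ⨆ (c : X) (r : ℝ) (_ : 0 < r),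
    μ (qball d c r) ^ (η - 1) * luxNorm μ q ((qball d c r).indicator w) *
      luxNorm μ (conjExp p) ((qball d c r).indicator fun x => (w x)⁻¹)

/-- The fractional maximal operator `M_η`. -/
def fracMax [MeasurableSpace X] (d : X → X → ℝ) (μ : Measure X) (η : ℝ)
    (f : X → ℝ≥0∞) (x : X) : ℝ≥0∞ :=
  ⨆ (c : X) (r : ℝ) (_ : 0 < r) (_ : x ∈ qball d c r),
    μ (qball d c r) ^ (η - 1) * ∫⁻ y in qball d c r, f y ∂μ

/-- The Muckenhoupt `A₁` condition: `Mw ≤ C w` a.e. -/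
def MemA1 [MeasurableSpace X] (d : X → X → ℝ) (μ : Measure X) (w : X → ℝ≥0∞) : Prop :=
  ∃ C : ℝ≥0∞, C ≠ ∞ ∧ ∀ᵐ x ∂μ, fracMax d μ 0 w x ≤ C * w x

/-- The Muckenhoupt `A_p` condition for `1 < p < ∞`. -/
def MemAp [MeasurableSpace X] (d : X → X → ℝ) (μ : Measure X) (p : ℝ)
    (w : X → ℝ≥0∞) : Prop :=
  (⨆ (c : X) (r : ℝ) (_ : 0 < r),
    ((μ (qball d c r))⁻¹ * ∫⁻ x in qball d c r, w x ∂μ) *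
      ((μ (qball d c r))⁻¹ * ∫⁻ x in qball d c r, w x ^ (-(1 / (p - 1))) ∂μ) ^ (p - 1)) ≠ ∞

/-- The class `A_∞ = ⋃_{p ≥ 1} A_p`. -/
def MemAinfty [MeasurableSpace X] (d : X → X → ℝ) (μ : Measure X) (w : X → ℝ≥0∞) : Prop :=
  MemA1 d μ w ∨ ∃ p : ℝ, 1 < p ∧ MemAp d μ p w


private lemma my_amgm (a b : ℝ≥0∞) {w₁ w₂ : ℝ} (h1 : 0 ≤ w₁) (h2 : 0 ≤ w₂)
    (hw : w₁ + w₂ = 1) : a ^ w₁ * b ^ w₂ ≤ a + b := by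
  calc a ^ w₁ * b ^ w₂ ≤ (a + b) ^ w₁ * (a + b) ^ w₂ :=
        mul_le_mul' (ENNReal.rpow_le_rpow le_self_add h1)
          (ENNReal.rpow_le_rpow le_add_self h2)
    _ = (a + b) ^ (w₁ + w₂) := (ENNReal.rpow_add_of_nonneg _ _ h1 h2).symm
    _ = a + b := by rw [hw, ENNReal.rpow_one]

private lemma conj_inv_eq {r : ℝ≥0∞} (h1 : 1 ≤ r) (htop : r ≠ ∞) :
    (r / (r - 1))⁻¹ = 1 - r⁻¹ := by
  rcases eq_or_lt_of_le h1 with h | h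
  · rw [← h]
    simp [ENNReal.div_zero]
  · have hr0 : r ≠ 0 := (zero_lt_one.trans h).ne'
    have hsub0 : r - 1 ≠ 0 := by
      simpa [tsub_eq_zero_iff_le] using not_le.mpr h
    rw [ENNReal.inv_div (Or.inr htop) (Or.inl hsub0),
      ENNReal.sub_div (fun _ _ => hr0), ENNReal.div_self hr0 htop, one_div]

private lemma lux_compare [MeasurableSpace X] (μ : Measure X) {η : ℝ}
    (hη0 : 0 < η) (hη1 : η < 1) (p q : X → ℝ≥0∞)
    (hp1 : ∀ x, 1 ≤ p x) (hptop : ∀ x, p x ≠ ∞)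
    (hq1 : ∀ x, 1 ≤ q x) (hqtop : ∀ x, q x ≠ ∞)
    (hpq : ∀ x, (p x)⁻¹ = (q x)⁻¹ + ENNReal.ofReal η)
    (hpmeas : Measurable p)
    {B : Set X} (hB : MeasurableSet B) (hB0 : μ B ≠ 0) (hBtop : μ B ≠ ∞)
    (g : X → ℝ≥0∞) :
    luxNorm μ (conjExp q) (B.indicator g) ≤
      4 * μ B ^ η * luxNorm μ (conjExp p) (B.indicator g) := by
  have hη' : ENNReal.ofReal η ≠ 0 := (ENNReal.ofReal_pos.mpr hη0).ne'
  have hPinv : ∀ x, (conjExp p x)⁻¹ = 1 - (p x)⁻¹ := fun x => by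
    rw [conjExp, if_neg (hptop x)]; exact conj_inv_eq (hp1 x) (hptop x)
  have hQinv : ∀ x, (conjExp q x)⁻¹ = 1 - (q x)⁻¹ := fun x => by
    rw [conjExp, if_neg (hqtop x)]; exact conj_inv_eq (hq1 x) (hqtop x)
  have hkey : ∀ x, (conjExp q x)⁻¹ = (conjExp p x)⁻¹ + ENNReal.ofReal η := by
    intro x
    have hq_inv : (q x)⁻¹ = (p x)⁻¹ - ENNReal.ofReal η := by
      rw [hpq x, ENNReal.add_sub_cancel_right ENNReal.ofReal_ne_top]
    have hle1 : (p x)⁻¹ ≤ 1 := ENNReal.inv_le_one.mpr (hp1 x)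
    have hle2 : ENNReal.ofReal η ≤ (p x)⁻¹ := by rw [hpq x]; exact le_add_self
    have hcanc : AddLECancellable ((p x)⁻¹ - ENNReal.ofReal η) :=
      ENNReal.cancel_of_ne (by
        exact ne_top_of_le_ne_top ENNReal.one_ne_top (le_trans tsub_le_self hle1))
    rw [hQinv x, hq_inv, hcanc.tsub_tsub_assoc hle1 hle2, hPinv x]
  have hQne : ∀ x, conjExp q x ≠ ∞ := by
    intro x
    rw [← ENNReal.inv_ne_zero, hkey x]
    intro h0
    exact hη' (add_eq_zero.mp h0).2
  have hQ1 : ∀ x, 1 ≤ conjExp q x := fun x =>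
    ENNReal.inv_le_one.mp (by rw [hQinv x]; exact tsub_le_self)
  have hQr1 : ∀ x, 1 ≤ (conjExp q x).toReal := fun x => by
    have := ENNReal.toReal_mono (hQne x) (hQ1 x); simpa using this
  have hconjmeas : Measurable (conjExp p) := by
    unfold conjExp
    exact Measurable.ite (hpmeas (measurableSet_singleton ∞)) measurable_const
      (hpmeas.div (hpmeas.sub measurable_const))
  have hPtop_meas : MeasurableSet {x | conjExp p x = ∞} :=
    hconjmeas (measurableSet_singleton ∞)
  have hPne_meas : MeasurableSet {x | conjExp p x ≠ ∞} := hPtop_meas.compl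
  set f := B.indicator g with hf
  set N := luxNorm μ (conjExp p) f with hNdef
  by_cases hNtop : N = ∞
  · rw [hNtop, ENNReal.mul_top
      (mul_ne_zero (by norm_num) (ENNReal.rpow_pos (pos_iff_ne_zero.mpr hB0) hBtop).ne')]
    exact le_top
  · have hμ2 : (2 : ℝ≥0∞) * μ B ≠ 0 := mul_ne_zero (by norm_num) hB0
    have hμ2' : (2 : ℝ≥0∞) * μ B ≠ ∞ := ENNReal.mul_ne_top (by norm_num) hBtop
    have hr0 : ((2:ℝ≥0∞) * μ B) ^ η ≠ 0 :=
      (ENNReal.rpow_pos (pos_iff_ne_zero.mpr hμ2) hμ2').ne'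
    have hrtop : ((2:ℝ≥0∞) * μ B) ^ η ≠ ∞ := ENNReal.rpow_ne_top_of_nonneg hη0.le hμ2'
    set c0 : ℝ≥0∞ := 2 * (2 * μ B) ^ η with hc0def
    have hc00 : c0 ≠ 0 := mul_ne_zero (by norm_num) hr0
    have hc0top : c0 ≠ ∞ := ENNReal.mul_ne_top (by norm_num) hrtop
    have ht_eval : (((2:ℝ≥0∞) * μ B) ^ (-η)) ^ η⁻¹ = (2 * μ B)⁻¹ := by
      rw [← ENNReal.rpow_mul, show -η * η⁻¹ = -1 by field_simp, ENNReal.rpow_neg_one]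
    have hstep : ∀ lam : ℝ≥0∞, 0 < lam →
        (∫⁻ x in {x | conjExp p x ≠ ∞}, (f x / lam) ^ (conjExp p x).toReal ∂μ) +
          essSup (fun x => f x / lam) (μ.restrict {x | conjExp p x = ∞}) ≤ 1 →
        luxNorm μ (conjExp q) f ≤ c0 * lam := by
      intro lam hlam hmod
      have hint : (∫⁻ x in {x | conjExp p x ≠ ∞}, (f x / lam) ^ (conjExp p x).toReal ∂μ) ≤ 1 :=
        le_trans le_self_add hmod
      have hess : ∀ᵐ x ∂μ, x ∈ {x | conjExp p x = ∞} → f x / lam ≤ 1 := by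
        have h1 : essSup (fun x => f x / lam) (μ.restrict {x | conjExp p x = ∞}) ≤ 1 :=
          le_trans le_add_self hmod
        have h2 := ENNReal.ae_le_essSup (μ := μ.restrict {x | conjExp p x = ∞})
          (fun x => f x / lam)
        exact (ae_restrict_iff' hPtop_meas).mp (h2.mono fun x hx => hx.trans h1)
      have hsplit : ∀ x, f x / (c0 * lam) = (f x / (2 * lam)) * (2 * μ B) ^ (-η) := by
        intro x
        rw [hc0def, div_eq_mul_inv, div_eq_mul_inv,
          show 2 * (2 * μ B) ^ η * lam = 2 * lam * (2 * μ B) ^ η by ring,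
          ENNReal.mul_inv (Or.inr hrtop) (Or.inr hr0), ENNReal.rpow_neg]
        ring
      apply sInf_le
      refine ⟨ENNReal.mul_pos hc00 hlam.ne', ?_⟩
      have hQset1 : {x | conjExp q x ≠ ∞} = (univ : Set X) := eq_univ_iff_forall.mpr hQne
      have hQset2 : {x | conjExp q x = ∞} = (∅ : Set X) :=
        eq_empty_iff_forall_notMem.mpr hQne
      rw [hQset1, hQset2, Measure.restrict_univ, Measure.restrict_empty, essSup_measure_zero]
      rw [ENNReal.bot_eq_zero, add_zero]
      have hptw : ∀ᵐ x ∂μ, (f x / (c0 * lam)) ^ (conjExp q x).toReal ≤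
          ({x | conjExp p x ≠ ∞}.indicator
              (fun y => (f y / lam) ^ (conjExp p y).toReal * 2⁻¹) x)
            + (B.indicator (fun _ => ((2:ℝ≥0∞) * μ B)⁻¹) x) := by
        filter_upwards [hess] with x hx
        by_cases hxB : x ∈ B
        · by_cases hxP : conjExp p x = ∞
          · -- p' infinite there
            have hu : f x / lam ≤ 1 := hx hxP
            have hu2 : f x / (2 * lam) ≤ 1 :=
              le_trans (ENNReal.div_le_div_left
                (le_mul_of_one_le_left (zero_le) one_le_two) _) hu
            have hQval : (conjExp q x).toReal = η⁻¹ := by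
              have h1 : (conjExp q x)⁻¹ = ENNReal.ofReal η := by
                rw [hkey x, hxP]; simp
              have h2 : conjExp q x = (ENNReal.ofReal η)⁻¹ := by
                rw [← h1, inv_inv]
              rw [h2, ENNReal.toReal_inv, ENNReal.toReal_ofReal hη0.le]
            calc (f x / (c0 * lam)) ^ (conjExp q x).toReal
                = ((f x / (2 * lam)) * (2 * μ B) ^ (-η)) ^ (conjExp q x).toReal := by
                  rw [hsplit x]
              _ ≤ ((2 * μ B) ^ (-η)) ^ (conjExp q x).toReal :=
                  ENNReal.rpow_le_rpow (mul_le_of_le_one_left (zero_le) hu2)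
                    ENNReal.toReal_nonneg
              _ = (2 * μ B)⁻¹ := by rw [hQval, ht_eval]
              _ ≤ _ := by
                  have hnot : x ∉ {x | conjExp p x ≠ ∞} := by simp [hxP]
                  rw [indicator_of_notMem hnot, indicator_of_mem hxB, zero_add]
          · -- p' finite: AM-GM
            have hP1 : 1 ≤ conjExp p x :=
              ENNReal.inv_le_one.mp (by rw [hPinv x]; exact tsub_le_self)
            have hPr1 : 1 ≤ (conjExp p x).toReal := by
              have := ENNReal.toReal_mono hxP hP1; simpa using this
            have hQr1x := hQr1 x
            set Pr := (conjExp p x).toReal with hPrdef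
            set Qr := (conjExp q x).toReal with hQrdef
            have hinv_real : Qr⁻¹ = Pr⁻¹ + η := by
              have h4 : ((conjExp q x)⁻¹).toReal
                  = ((conjExp p x)⁻¹ + ENNReal.ofReal η).toReal := by rw [hkey x]
              rw [ENNReal.toReal_add (ENNReal.inv_ne_top.mpr (zero_lt_one.trans_le hP1).ne')
                ENNReal.ofReal_ne_top, ENNReal.toReal_inv, ENNReal.toReal_inv,
                ENNReal.toReal_ofReal hη0.le] at h4
              exact h4
            have hPr0 : Pr ≠ 0 := by linarith
            have hQr0 : Qr ≠ 0 := by linarith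
            have hw : Qr / Pr + Qr * η = 1 := by
              rw [div_eq_mul_inv, ← mul_add, ← hinv_real, mul_inv_cancel₀ hQr0]
            calc (f x / (c0 * lam)) ^ Qr
                = (f x / (2 * lam)) ^ Qr * (((2:ℝ≥0∞) * μ B) ^ (-η)) ^ Qr := by
                  rw [hsplit x, ENNReal.mul_rpow_of_nonneg _ _ ENNReal.toReal_nonneg]
              _ = ((f x / (2 * lam)) ^ Pr) ^ (Qr / Pr)
                  * ((((2:ℝ≥0∞) * μ B) ^ (-η)) ^ η⁻¹) ^ (Qr * η) := by
                  rw [← ENNReal.rpow_mul (f x / (2 * lam)) Pr (Qr / Pr),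
                    ← ENNReal.rpow_mul (((2:ℝ≥0∞) * μ B) ^ (-η)) η⁻¹ (Qr * η),
                    show Pr * (Qr / Pr) = Qr from by field_simp,
                    show η⁻¹ * (Qr * η) = Qr from by field_simp]
              _ ≤ (f x / (2 * lam)) ^ Pr + (((2:ℝ≥0∞) * μ B) ^ (-η)) ^ η⁻¹ :=
                  my_amgm _ _ (div_nonneg (by linarith) (by linarith))
                    (mul_nonneg (by linarith) hη0.le) hw
              _ ≤ (f x / lam) ^ Pr * 2⁻¹ + (2 * μ B)⁻¹ := by
                  refine add_le_add ?_ (le_of_eq ht_eval)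
                  have hsp : f x / (2 * lam) = (f x / lam) * 2⁻¹ := by
                    rw [div_eq_mul_inv, div_eq_mul_inv,
                      ENNReal.mul_inv (Or.inl (by norm_num)) (Or.inl (by norm_num))]
                    ring
                  rw [hsp, ENNReal.mul_rpow_of_nonneg _ _ (by linarith : (0:ℝ) ≤ Pr)]
                  refine mul_le_mul_right ?_ _
                  calc ((2:ℝ≥0∞)⁻¹) ^ Pr ≤ (2⁻¹ : ℝ≥0∞) ^ (1:ℝ) :=
                        ENNReal.rpow_le_rpow_of_exponent_ge
                          (ENNReal.inv_le_one.mpr one_le_two) hPr1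
                    _ = 2⁻¹ := ENNReal.rpow_one _
              _ = _ := by
                  have hmem : x ∈ {x | conjExp p x ≠ ∞} := hxP
                  rw [indicator_of_mem hmem, indicator_of_mem hxB]
        · have hfx : f x = 0 := indicator_of_notMem hxB g
          rw [hfx, ENNReal.zero_div, ENNReal.zero_rpow_of_pos (by linarith [hQr1 x])]
          exact zero_le
      calc (∫⁻ x, (f x / (c0 * lam)) ^ (conjExp q x).toReal ∂μ)
          ≤ ∫⁻ x, (({x | conjExp p x ≠ ∞}.indicator
              (fun y => (f y / lam) ^ (conjExp p y).toReal * 2⁻¹) x)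
            + (B.indicator (fun _ => ((2:ℝ≥0∞) * μ B)⁻¹) x)) ∂μ := lintegral_mono_ae hptw
        _ = (∫⁻ x, {x | conjExp p x ≠ ∞}.indicator
              (fun y => (f y / lam) ^ (conjExp p y).toReal * 2⁻¹) x ∂μ)
            + ∫⁻ x, B.indicator (fun _ => ((2:ℝ≥0∞) * μ B)⁻¹) x ∂μ :=
            lintegral_add_right _ (measurable_const.indicator hB)
        _ ≤ 2⁻¹ + 2⁻¹ := by
            refine add_le_add ?_ ?_
            · rw [lintegral_indicator hPne_meas,
                lintegral_mul_const' _ _ (by norm_num : (2⁻¹:ℝ≥0∞) ≠ ∞)]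
              calc (∫⁻ x in {x | conjExp p x ≠ ∞}, (f x / lam) ^ (conjExp p x).toReal ∂μ) * 2⁻¹
                  ≤ 1 * 2⁻¹ := mul_le_mul_left hint _
                _ = 2⁻¹ := one_mul _
            · rw [lintegral_indicator_const hB,
                ENNReal.mul_inv (Or.inl (by norm_num)) (Or.inl (by norm_num)),
                mul_assoc, ENNReal.inv_mul_cancel hB0 hBtop, mul_one]
        _ = 1 := ENNReal.inv_two_add_inv_two
    have hle : luxNorm μ (conjExp q) f / c0 ≤ N := by
      rw [hNdef]
      unfold luxNorm
      refine le_sInf fun b hb => ?_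
      obtain ⟨hb0, hbmod⟩ := hb
      rw [ENNReal.div_le_iff_le_mul (Or.inl hc00) (Or.inl hc0top)]
      exact (hstep b hb0 hbmod).trans_eq (mul_comm _ _)
    have hle2 : luxNorm μ (conjExp q) f ≤ N * c0 :=
      (ENNReal.div_le_iff_le_mul (Or.inl hc00) (Or.inl hc0top)).mp hle
    calc luxNorm μ (conjExp q) f ≤ N * c0 := hle2
      _ = 2 * ((2:ℝ≥0∞) ^ η * μ B ^ η) * N := by
          rw [hc0def, ENNReal.mul_rpow_of_nonneg _ _ hη0.le]; ring
      _ ≤ 2 * ((2:ℝ≥0∞) * μ B ^ η) * N := by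
          refine mul_le_mul_left (mul_le_mul_right (mul_le_mul_left ?_ _) _) _
          calc (2:ℝ≥0∞) ^ η ≤ (2:ℝ≥0∞) ^ (1:ℝ) :=
              ENNReal.rpow_le_rpow_of_exponent_le one_le_two hη1.le
            _ = 2 := ENNReal.rpow_one _
      _ = 4 * μ B ^ η * N := by ring


/-- `[ω]_{A_{q(·)}} ≤ C·[ω]_{A_{p(·),q(·)}}`. -/
theorem statement4 {X : Type*} [MeasurableSpace X]
    (d : X → X → ℝ) (A0 : ℝ) (μ : Measure X) (Cμ : ℝ≥0∞)
    (hd : IsQuasiMetric d A0)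
    (hball : ∀ (c : X) (r : ℝ), MeasurableSet (qball d c r))
    (hdbl : IsDoubling d μ Cμ)
    (η : ℝ) (hη0 : 0 ≤ η) (hη1 : η < 1)
    (p q : X → ℝ≥0∞) (hp : MemP1 μ p) (hq : MemP1 μ q)
    (hpq : ∀ x, (p x)⁻¹ = (q x)⁻¹ + ENNReal.ofReal η)
    (ω : X → ℝ≥0∞) (hω : IsWeight d μ ω) :
    ∃ C : ℝ≥0∞, C ≠ ∞ ∧ ApqConst d μ 0 q q ω ≤ C * ApqConst d μ η p q ω := by
  rcases eq_or_lt_of_le hη0 with hη | hη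
  · -- η = 0 : then p = q and the two constants coincide
    subst hη
    have hpq' : p = q := by
      funext x
      have h := hpq x
      rw [ENNReal.ofReal_zero, add_zero] at h
      calc p x = ((p x)⁻¹)⁻¹ := (inv_inv _).symm
        _ = ((q x)⁻¹)⁻¹ := by rw [h]
        _ = q x := inv_inv _
    exact ⟨1, one_ne_top, by rw [hpq', one_mul]⟩
  · obtain ⟨hpmeas, hp1, hptop, -⟩ := hp
    obtain ⟨hqmeas, hq1, hqtop, -⟩ := hq
    refine ⟨4, by simp, ?_⟩
    refine iSup_le fun c => iSup_le fun r => iSup_le fun hr => ?_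
    obtain ⟨h2r, hle, hfin⟩ := hdbl.2 c r hr
    have hB0 : μ (qball d c r) ≠ 0 := by
      intro h
      rw [h, mul_zero] at hle
      exact absurd (h2r.trans_le hle) (lt_irrefl 0)
    have hBtop : μ (qball d c r) ≠ ∞ :=
      (lt_of_le_of_lt (le_mul_of_one_le_left (zero_le) hdbl.1) hfin).ne
    have key := lux_compare μ hη hη1 p q hp1 hptop hq1 hqtop hpq hpmeas
      (hball c r) hB0 hBtop (fun x => (ω x)⁻¹)
    calc μ (qball d c r) ^ ((0:ℝ) - 1) * luxNorm μ q ((qball d c r).indicator ω) *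
          luxNorm μ (conjExp q) ((qball d c r).indicator fun x => (ω x)⁻¹)
        ≤ μ (qball d c r) ^ ((0:ℝ) - 1) * luxNorm μ q ((qball d c r).indicator ω) *
          (4 * μ (qball d c r) ^ η *
            luxNorm μ (conjExp p) ((qball d c r).indicator fun x => (ω x)⁻¹)) :=
          mul_le_mul_right key _
      _ = 4 * (μ (qball d c r) ^ (η - 1) * luxNorm μ q ((qball d c r).indicator ω) *
          luxNorm μ (conjExp p) ((qball d c r).indicator fun x => (ω x)⁻¹)) := by
          rw [show (η - 1 : ℝ) = 0 - 1 + η by ring, ENNReal.rpow_add _ _ hB0 hBtop]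
          ring
      _ ≤ 4 * ApqConst d μ η p q ω := by
          refine mul_le_mul_right ?_ (4 : ℝ≥0∞)
          exact le_iSup_of_le c (le_iSup_of_le r (le_iSup_of_le hr le_rfl))


end
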